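/- π² = 4 ln²(1 + √2) + 8 ∫_{ln(1+√2)}^{∞} arcsinh(csch x) dx, where csch x = 1/sinh x and arcsinh is the inverse hyperbolic sine; the improper integral converges. -/

import Mathlib

set_option maxHeartbeats 1000000

open Real MeasureTheory Set Filter Topology

noncomputable section

namespace PiAux

def A : ℝ := Real.log (1 + Real.sqrt 2)

def f (x : ℝ) : ℝ := Real.arsinh (1 / Real.sinh x)

lemma sqrt2_lt : Real.sqrt 2 < 3/2 := by
  nlinarith [Real.sq_sqrt (by norm_num : (2:ℝ) ≥ 0), Real.sqrt_nonneg 2]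

lemma one_le_sqrt2 : 1 ≤ Real.sqrt 2 := by
  nlinarith [Real.sq_sqrt (by norm_num : (2:ℝ) ≥ 0), Real.sqrt_nonneg 2]

lemma A_pos : 0 < A := Real.log_pos (by nlinarith [one_le_sqrt2])

lemma exp_A : Real.exp A = 1 + Real.sqrt 2 :=
  Real.exp_log (by nlinarith [one_le_sqrt2])

lemma two_le_exp_A : 2 ≤ Real.exp A := by rw [exp_A]; nlinarith [one_le_sqrt2]

lemma A_lt_one : A < 1 := by
  have h : (1 : ℝ) + Real.sqrt 2 < Real.exp 1 := by
    nlinarith [Real.exp_one_gt_d9, sqrt2_lt]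
  have := Real.log_lt_log (by nlinarith [one_le_sqrt2]) h
  simpa [A, Real.log_exp] using this

lemma sinh_A : Real.sinh A = 1 := by
  rw [Real.sinh_eq, Real.exp_neg, exp_A]
  have h2 : (0:ℝ) < 1 + Real.sqrt 2 := by nlinarith [one_le_sqrt2]
  field_simp
  nlinarith [Real.sq_sqrt (by norm_num : (2:ℝ) ≥ 0)]

lemma arsinh_one : Real.arsinh 1 = A := by
  rw [← sinh_A, Real.arsinh_sinh]

lemma f_A : f A = A := by
  simp [f, sinh_A, arsinh_one]

lemma f_pos {x : ℝ} (hx : 0 < x) : 0 < f x :=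
  Real.arsinh_pos_iff.mpr (div_pos one_pos (Real.sinh_pos_iff.mpr hx))

lemma f_invol {x : ℝ} (hx : 0 < x) : f (f x) = x := by
  simp [f, Real.sinh_arsinh, one_div_one_div, Real.arsinh_sinh]

lemma sqrt_aux {x : ℝ} (hx : 0 < x) :
    Real.sqrt (1 + (1 / Real.sinh x) ^ 2) = Real.cosh x / Real.sinh x := by
  have hs : 0 < Real.sinh x := Real.sinh_pos_iff.mpr hx
  have h : 1 + (1 / Real.sinh x) ^ 2 = (Real.cosh x / Real.sinh x) ^ 2 := by
    have := Real.cosh_sq x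
    field_simp
    nlinarith [Real.cosh_sq x]
  rw [h]
  exact Real.sqrt_sq (div_pos (Real.cosh_pos x) hs).le

lemma f_eq_log {x : ℝ} (hx : 0 < x) :
    f x = Real.log (1 + Real.exp (-x)) - Real.log (1 - Real.exp (-x)) := by
  have hs : 0 < Real.sinh x := Real.sinh_pos_iff.mpr hx
  have hu1 : Real.exp (-x) < 1 := Real.exp_lt_one_iff.mpr (by linarith)
  have hu0 : 0 < Real.exp (-x) := Real.exp_pos _
  have h1 : f x = Real.log ((1 + Real.cosh x) / Real.sinh x) := by
    simp only [f, Real.arsinh, sqrt_aux hx]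
    congr 1
    field_simp
  rw [h1, ← Real.log_div (by positivity) (by linarith)]
  congr 1
  have hvu : Real.exp x * Real.exp (-x) = 1 := by
    rw [← Real.exp_add]; simp
  have hx1 : Real.exp x - Real.exp (-x) ≠ 0 := by
    have := Real.exp_lt_exp.mpr (show -x < x by linarith)
    linarith
  have hne : (1 : ℝ) - Real.exp (-x) ≠ 0 := by linarith
  rw [Real.cosh_eq, Real.sinh_eq]
  rw [div_eq_div_iff (by rw [← Real.sinh_eq]; exact hs.ne') hne]
  linear_combination -hvu

lemma f_hasDeriv {x : ℝ} (hx : 0 < x) : HasDerivAt f (-(1 / Real.sinh x)) x := by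
  have hs : 0 < Real.sinh x := Real.sinh_pos_iff.mpr hx
  have h1 : HasDerivAt (fun y => 1 / Real.sinh y)
      (-Real.cosh x / Real.sinh x ^ 2) x := by
    have h := (Real.hasDerivAt_sinh x).inv hs.ne'
    simp only [one_div]; exact h
  have h2 := (Real.hasDerivAt_arsinh (1 / Real.sinh x)).comp x h1
  refine (h2 : HasDerivAt f _ x).congr_deriv ?_
  rw [sqrt_aux hx]
  have hc : 0 < Real.cosh x := Real.cosh_pos x
  field_simp

lemma f_contOn : ContinuousOn f (Ioi 0) := by
  apply Real.continuous_arsinh.comp_continuousOn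
  exact continuousOn_const.div Real.continuous_sinh.continuousOn
    (fun x hx => (Real.sinh_pos_iff.mpr hx).ne')

lemma f_meas : Measurable f :=
  Real.continuous_arsinh.measurable.comp (measurable_const.div Real.continuous_sinh.measurable)

lemma f_le_self {x : ℝ} (hx : 0 < x) : f x ≤ 1 / Real.sinh x := by
  have hs : 0 < Real.sinh x := Real.sinh_pos_iff.mpr hx
  have h := (Real.self_lt_sinh_iff.mpr (show 0 < 1 / Real.sinh x by positivity)).le
  calc f x = Real.arsinh (1 / Real.sinh x) := rfl
    _ ≤ Real.arsinh (Real.sinh (1 / Real.sinh x)) := Real.arsinh_le_arsinh.mpr h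
    _ = 1 / Real.sinh x := Real.arsinh_sinh _

lemma f_le_exp {x : ℝ} (hx : A ≤ x) : f x ≤ 4 * Real.exp (-x) := by
  have hx0 : 0 < x := lt_of_lt_of_le A_pos hx
  have hs : 0 < Real.sinh x := Real.sinh_pos_iff.mpr hx0
  have hu : Real.exp (-x) ≤ 1/2 := by
    have h1 : Real.exp (-x) ≤ Real.exp (-A) := Real.exp_le_exp.mpr (by linarith)
    have h2 : Real.exp (-A) ≤ 1/2 := by
      rw [Real.exp_neg]
      rw [inv_le_comm₀ (Real.exp_pos A) (by norm_num)]
      have := two_le_exp_A; linarith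
    linarith
  have hv : 2 ≤ Real.exp x := by
    have := Real.exp_le_exp.mpr hx
    have := two_le_exp_A; linarith
  have h2 : Real.exp x / 4 ≤ Real.sinh x := by
    rw [Real.sinh_eq]; linarith
  have h3 : 1 / Real.sinh x ≤ 1 / (Real.exp x / 4) :=
    one_div_le_one_div_of_le (by positivity) h2
  have h4 : 1 / (Real.exp x / 4) = 4 * Real.exp (-x) := by
    rw [Real.exp_neg]; field_simp
  calc f x ≤ 1 / Real.sinh x := f_le_self hx0
    _ ≤ 1 / (Real.exp x / 4) := h3
    _ = 4 * Real.exp (-x) := h4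

lemma f_le_A {x : ℝ} (hx : A ≤ x) : f x ≤ A := by
  have hx0 : 0 < x := lt_of_lt_of_le A_pos hx
  have hs : 1 ≤ Real.sinh x := by
    rw [← sinh_A]; exact Real.sinh_le_sinh.mpr hx
  calc f x = Real.arsinh (1 / Real.sinh x) := rfl
    _ ≤ Real.arsinh 1 := Real.arsinh_le_arsinh.mpr (by
        rw [div_le_one (by linarith)]; exact hs)
    _ = A := arsinh_one

lemma integrable_Ioi : IntegrableOn f (Ioi A) := by
  have hg : IntegrableOn (fun x => 4 * Real.exp (-x)) (Ioi A) := by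
    have := (exp_neg_integrableOn_Ioi A (by norm_num : (0:ℝ) < 1)).const_mul 4
    simpa [IntegrableOn] using this
  apply hg.integrable.mono (f_meas.aestronglyMeasurable)
  rw [ae_restrict_iff' measurableSet_Ioi]
  filter_upwards with x hx
  have hx' : A ≤ x := (mem_Ioi.mp hx).le
  rw [Real.norm_of_nonneg (f_pos (lt_of_lt_of_le A_pos hx')).le,
    Real.norm_of_nonneg (by positivity)]
  exact f_le_exp hx'

lemma f_le_rpow {x : ℝ} (hx : 0 < x) (hxa : x ≤ A) : f x ≤ 4 * x ^ (-(1/2) : ℝ) := by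
  have hu0 : 0 < Real.exp (-x) := Real.exp_pos _
  have hu1 : Real.exp (-x) < 1 := Real.exp_lt_one_iff.mpr (by linarith)
  set t := x ^ (-(1/2) : ℝ) with ht_def
  have ht : 0 < t := Real.rpow_pos_of_pos hx _
  have hlogt : Real.log t = -(1/2) * Real.log x := Real.log_rpow hx _
  have hx1 : x ≤ 1 := le_trans hxa A_lt_one.le
  have hlogx : Real.log x ≤ 0 := Real.log_nonpos hx.le hx1
  have ht1 : 1 ≤ t := by
    have h0 : 0 ≤ Real.log t := by rw [hlogt]; nlinarith
    calc (1:ℝ) = Real.exp 0 := by simp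
      _ ≤ Real.exp (Real.log t) := Real.exp_le_exp.mpr h0
      _ = t := Real.exp_log ht
  have hneg : -Real.log x ≤ 2 * (t - 1) := by
    have := Real.log_le_sub_one_of_pos ht
    rw [hlogt] at this; linarith
  rw [f_eq_log hx]
  have h1 : Real.log (1 + Real.exp (-x)) ≤ 1 := by
    have : Real.log (1 + Real.exp (-x)) ≤ Real.log 2 :=
      Real.log_le_log (by positivity) (by linarith)
    have h2 : Real.log 2 ≤ 1 := by
      have := Real.log_le_sub_one_of_pos (show (0:ℝ) < 2 by norm_num); linarith
    linarith
  have h2 : Real.log x - x ≤ Real.log (1 - Real.exp (-x)) := by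
    have hxe : x * Real.exp (-x) ≤ 1 - Real.exp (-x) := by
      have h0 := mul_le_mul_of_nonneg_right (Real.add_one_le_exp x) hu0.le
      have hvu : Real.exp x * Real.exp (-x) = 1 := by rw [← Real.exp_add]; simp
      nlinarith
    have hpos : 0 < x * Real.exp (-x) := by positivity
    have := Real.log_le_log hpos hxe
    rw [Real.log_mul hx.ne' hu0.ne', Real.log_exp] at this
    linarith
  nlinarith [hneg, h1, h2, hx1]

lemma integrable_Ioc : IntegrableOn f (Ioc 0 A) := by
  have hg0 : IntervalIntegrable (fun x : ℝ => x ^ (-(1/2) : ℝ)) volume 0 A :=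
    intervalIntegral.intervalIntegrable_rpow' (by norm_num)
  have hg : IntegrableOn (fun x : ℝ => 4 * x ^ (-(1/2) : ℝ)) (Ioc 0 A) := by
    have := (intervalIntegrable_iff_integrableOn_Ioc_of_le A_pos.le).mp hg0
    simpa [IntegrableOn] using this.const_mul 4
  apply hg.integrable.mono (f_meas.aestronglyMeasurable)
  rw [ae_restrict_iff' measurableSet_Ioc]
  filter_upwards with x hx
  have hx0 : 0 < x := hx.1
  rw [Real.norm_of_nonneg (f_pos hx0).le,
    Real.norm_of_nonneg (by positivity)]
  exact f_le_rpow hx0 hx.2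

lemma hasSum_odd : HasSum (fun n : ℕ => (1:ℝ) / (2 * (n:ℝ) + 1) ^ 2) (π ^ 2 / 8) := by
  have h := hasSum_zeta_two
  have heven : HasSum (fun k : ℕ => (1:ℝ) / ((2 * k : ℕ) : ℝ) ^ 2) (π ^ 2 / 24) := by
    have h4 := h.mul_left (1/4)
    have he : (fun k : ℕ => (1/4 : ℝ) * (1 / (k:ℝ) ^ 2))
        = fun k : ℕ => (1:ℝ) / ((2 * k : ℕ) : ℝ) ^ 2 := by
      funext k
      rcases Nat.eq_zero_or_pos k with rfl | hk
      · simp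
      · have hk' : (0:ℝ) < (k:ℝ) := by exact_mod_cast hk
        push_cast
        field_simp
        ring
    rw [he] at h4
    convert h4 using 1
    · rfl
    ring
  set g : ℕ → ℝ := fun n => (1:ℝ) / (n : ℝ) ^ 2 with hg
  have hinj : Function.Injective (fun k : ℕ => 2 * k + 1) := fun m n hmn => by
    dsimp at hmn; omega
  have hodd_sum : Summable (fun k : ℕ => g (2 * k + 1)) :=
    h.summable.comp_injective (i := fun k : ℕ => 2 * k + 1) hinj
  have hodd := hodd_sum.hasSum
  have heven' : HasSum (fun k : ℕ => g (2 * k)) (π ^ 2 / 24) := heven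
  have htot : HasSum g (π ^ 2 / 24 + ∑' k : ℕ, g (2 * k + 1)) :=
    HasSum.even_add_odd heven' hodd
  have huniq : π ^ 2 / 6 = π ^ 2 / 24 + ∑' k : ℕ, g (2 * k + 1) := h.unique htot
  have htsum : ∑' k : ℕ, g (2 * k + 1) = π ^ 2 / 8 := by linarith
  rw [htsum] at hodd
  convert hodd using 2 with n
  rw [hg]
  push_cast
  ring

lemma integral_exp_term (n : ℕ) :
    ∫ x in Ioi (0:ℝ), Real.exp (-((2 * (n:ℝ) + 1) * x)) = 1 / (2 * (n:ℝ) + 1) := by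
  have hb : (0:ℝ) < 2 * (n:ℝ) + 1 := by positivity
  have := integral_comp_mul_left_Ioi (fun y => Real.exp (-y)) 0 hb
  simp only [mul_zero] at this
  rw [show (fun x => Real.exp (-((2 * (n:ℝ) + 1) * x)))
      = fun x => (fun y => Real.exp (-y)) ((2 * (n:ℝ) + 1) * x) from rfl, this,
    integral_exp_neg_Ioi]
  simp [smul_eq_mul, one_div]

lemma integral_Ioi_zero : ∫ x in Ioi (0:ℝ), f x = π ^ 2 / 4 := by
  set F : ℕ → ℝ → ℝ :=
    fun n x => 2 * (1 / (2 * (n:ℝ) + 1)) * Real.exp (-((2 * (n:ℝ) + 1) * x)) with hF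
  have hb : ∀ n : ℕ, (0:ℝ) < 2 * (n:ℝ) + 1 := fun n => by positivity
  have hFint : ∀ n, Integrable (F n) (volume.restrict (Ioi (0:ℝ))) := by
    intro n
    have := (exp_neg_integrableOn_Ioi 0 (hb n)).const_mul (2 * (1 / (2 * (n:ℝ) + 1)))
    exact this.congr (Filter.Eventually.of_forall fun x => by dsimp only [hF]; rw [neg_mul])
  have hFval : ∀ n, ∫ x in Ioi (0:ℝ), F n x = 2 * (1 / (2 * (n:ℝ) + 1) ^ 2) := by
    intro n
    rw [show F n = fun x => 2 * (1 / (2 * (n:ℝ) + 1)) * Real.exp (-((2 * (n:ℝ) + 1) * x))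
      from rfl]
    rw [MeasureTheory.integral_const_mul, integral_exp_term n]
    have := (hb n).ne'
    field_simp
  have hFnonneg : ∀ n x, 0 ≤ F n x := by
    intro n x
    have := (hb n).le
    have := (Real.exp_pos (-((2 * (n:ℝ) + 1) * x))).le
    positivity
  have hsum : Summable fun n => ∫ x in Ioi (0:ℝ), ‖F n x‖ := by
    have : (fun n : ℕ => ∫ x in Ioi (0:ℝ), ‖F n x‖)
        = fun n : ℕ => 2 * (1 / (2 * (n:ℝ) + 1) ^ 2) := by
      funext n
      rw [← hFval n]
      congr 1
      funext x
      rw [Real.norm_of_nonneg (hFnonneg n x)]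
    rw [this]
    exact (hasSum_odd.mul_left 2).summable
  have htsum : ∀ x ∈ Ioi (0:ℝ), HasSum (fun n => F n x) (f x) := by
    intro x hx
    have hx0 : 0 < x := hx
    have ht : |Real.exp (-x)| < 1 := by
      rw [abs_of_pos (Real.exp_pos _)]
      exact Real.exp_lt_one_iff.mpr (by linarith)
    have h := Real.hasSum_log_sub_log_of_abs_lt_one ht
    rw [← f_eq_log hx0] at h
    convert h using 2 with k
    rw [hF]
    simp only
    congr 1
    rw [← Real.exp_nat_mul]
    congr 1
    push_cast
    ring
  have key : ∫ x in Ioi (0:ℝ), f x = ∫ x in Ioi (0:ℝ), ∑' n, F n x := by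
    apply setIntegral_congr_fun measurableSet_Ioi
    intro x hx
    exact ((htsum x hx).tsum_eq).symm
  rw [key, ← MeasureTheory.integral_tsum_of_summable_integral_norm hFint hsum]
  have : (fun n : ℕ => ∫ x in Ioi (0:ℝ), F n x)
      = fun n : ℕ => 2 * (1 / (2 * (n:ℝ) + 1) ^ 2) := funext hFval
  rw [this]
  have := (hasSum_odd.mul_left 2).tsum_eq
  rw [this]
  ring

lemma finite_identity {T : ℝ} (hT : A ≤ T) :
    ∫ x in (f T)..A, f x = A ^ 2 + (∫ x in A..T, f x) - T * f T := by
  have huIcc : uIcc A T = Icc A T := uIcc_of_le hT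
  have hmem_pos : ∀ x ∈ uIcc A T, 0 < x := by
    intro x hx
    rw [huIcc] at hx
    exact lt_of_lt_of_le A_pos hx.1
  have hderiv : ∀ x ∈ uIcc A T, HasDerivAt f (-(1 / Real.sinh x)) x :=
    fun x hx => f_hasDeriv (hmem_pos x hx)
  have hcont' : ContinuousOn (fun x => -(1 / Real.sinh x)) (uIcc A T) := by
    apply ContinuousOn.neg
    exact continuousOn_const.div Real.continuous_sinh.continuousOn
      (fun x hx => (Real.sinh_pos_iff.mpr (hmem_pos x hx)).ne')
  have himg : f '' uIcc A T ⊆ Ioi 0 := by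
    rintro y ⟨x, hx, rfl⟩
    exact f_pos (hmem_pos x hx)
  have hgcont : ContinuousOn f (f '' uIcc A T) := f_contOn.mono himg
  have h1 : (∫ x in A..T, (-(1 / Real.sinh x)) • (f ∘ f) x) = ∫ u in (f A)..(f T), f u :=
    intervalIntegral.integral_comp_smul_deriv' hderiv hcont' hgcont
  have h2 : (∫ x in A..T, (-(1 / Real.sinh x)) • (f ∘ f) x)
      = ∫ x in A..T, x * (-(1 / Real.sinh x)) := by
    apply intervalIntegral.integral_congr
    intro x hx
    simp [Function.comp, f_invol (hmem_pos x hx), smul_eq_mul, mul_comm]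
  have hvint : IntervalIntegrable (fun x => -(1 / Real.sinh x)) volume A T :=
    hcont'.intervalIntegrable
  have hfint : IntervalIntegrable f volume A T :=
    (f_contOn.mono (by rw [huIcc]; intro x hx; exact lt_of_lt_of_le A_pos hx.1)).intervalIntegrable
  have h3 : ∫ x in A..T, x * (-(1 / Real.sinh x))
      = T * f T - A * f A - ∫ x in A..T, 1 * f x := by
    apply intervalIntegral.integral_mul_deriv_eq_deriv_mul
      (fun x _ => hasDerivAt_id x) hderiv
      (by apply intervalIntegrable_const) hvint
  have h4 : ∫ x in (f A)..(f T), f x = T * f T - A ^ 2 - ∫ x in A..T, f x := by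
    rw [← h1, h2, h3, f_A]
    simp only [one_mul]
    ring
  rw [f_A] at h4
  rw [intervalIntegral.integral_symm A (f T), h4]
  ring

lemma tendsto_fT : Tendsto f atTop (𝓝 0) := by
  have hb : Tendsto (fun T : ℝ => 4 * Real.exp (-T)) atTop (𝓝 0) := by
    have h := Real.tendsto_exp_neg_atTop_nhds_zero
    simpa using h.const_mul (4:ℝ)
  refine squeeze_zero_norm' ?_ hb
  filter_upwards [eventually_ge_atTop A] with T hT
  rw [Real.norm_of_nonneg (f_pos (lt_of_lt_of_le A_pos hT)).le]
  exact f_le_exp hT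

lemma tendsto_TfT : Tendsto (fun T => T * f T) atTop (𝓝 0) := by
  have hb : Tendsto (fun T : ℝ => 4 * (T ^ 1 * Real.exp (-T))) atTop (𝓝 0) := by
    have h := Real.tendsto_pow_mul_exp_neg_atTop_nhds_zero 1
    simpa using h.const_mul (4:ℝ)
  refine squeeze_zero_norm' ?_ hb
  filter_upwards [eventually_ge_atTop A] with T hT
  have hT0 : 0 < T := lt_of_lt_of_le A_pos hT
  rw [Real.norm_of_nonneg (mul_nonneg hT0.le (f_pos hT0).le)]
  calc T * f T ≤ T * (4 * Real.exp (-T)) :=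
        mul_le_mul_of_nonneg_left (f_le_exp hT) hT0.le
    _ = 4 * (T ^ 1 * Real.exp (-T)) := by ring

lemma key_identity : ∫ x in Ioc (0:ℝ) A, f x = A ^ 2 + ∫ x in Ioi A, f x := by
  set J := ∫ x in Ioi A, f x
  have hJ : Tendsto (fun T => ∫ x in A..T, f x) atTop (𝓝 J) :=
    intervalIntegral_tendsto_integral_Ioi A integrable_Ioi tendsto_id
  have hRHS : Tendsto (fun T => A ^ 2 + (∫ x in A..T, f x) - T * f T) atTop
      (𝓝 (A ^ 2 + J)) := by
    have := (tendsto_const_nhds (x := A ^ 2)).add hJ |>.sub tendsto_TfT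
    simpa using this
  have hIcc_int : IntegrableOn f (uIcc 0 A) := by
    rw [uIcc_of_le A_pos.le, integrableOn_Icc_iff_integrableOn_Ioc]
    exact integrable_Ioc
  have hGcont : ContinuousOn (fun u => ∫ x in u..A, f x) (uIcc 0 A) :=
    intervalIntegral.continuousOn_primitive_interval_left hIcc_int
  have hmem : ∀ᶠ T in atTop, f T ∈ uIcc (0:ℝ) A := by
    filter_upwards [eventually_ge_atTop A] with T hT
    rw [uIcc_of_le A_pos.le]
    exact ⟨(f_pos (lt_of_lt_of_le A_pos hT)).le, f_le_A hT⟩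
  have h0mem : (0:ℝ) ∈ uIcc (0:ℝ) A := by
    rw [uIcc_of_le A_pos.le]; exact ⟨le_refl 0, A_pos.le⟩
  have hftend : Tendsto f atTop (𝓝[uIcc (0:ℝ) A] 0) :=
    tendsto_nhdsWithin_of_tendsto_nhds_of_eventually_within _ tendsto_fT hmem
  have hLHS : Tendsto (fun T => ∫ x in (f T)..A, f x) atTop
      (𝓝 (∫ x in (0:ℝ)..A, f x)) :=
    ((hGcont 0 h0mem).tendsto).comp hftend
  have heq : ∀ᶠ T in atTop, (∫ x in (f T)..A, f x)
      = A ^ 2 + (∫ x in A..T, f x) - T * f T := by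
    filter_upwards [eventually_ge_atTop A] with T hT
    exact finite_identity hT
  have := tendsto_nhds_unique (hLHS.congr' heq) hRHS
  rw [← intervalIntegral.integral_of_le A_pos.le, this]

end PiAux

open PiAux

/-- π² = 4 ln²(1+√2) + 8 ∫_{ln(1+√2)}^∞ arcsinh(csch x) dx, where csch x = 1/sinh x;
the improper integral converges. -/
theorem pi_sq_arsinh_csch :
    IntegrableOn (fun x : ℝ => Real.arsinh (1 / Real.sinh x))
      (Set.Ioi (Real.log (1 + Real.sqrt 2))) ∧
    π ^ 2 = 4 * Real.log (1 + Real.sqrt 2) ^ 2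
      + 8 * ∫ x in Set.Ioi (Real.log (1 + Real.sqrt 2)),
              Real.arsinh (1 / Real.sinh x) := by
  have hInt : IntegrableOn f (Set.Ioi A) := integrable_Ioi
  constructor
  · exact hInt
  · have hsplit : ∫ x in Ioi (0:ℝ), f x
        = (∫ x in Ioc (0:ℝ) A, f x) + ∫ x in Ioi A, f x := by
      rw [← Ioc_union_Ioi_eq_Ioi A_pos.le]
      exact setIntegral_union Ioc_disjoint_Ioi_same measurableSet_Ioi
        integrable_Ioc hInt
    have h1 := integral_Ioi_zero
    have h2 := key_identity
    rw [hsplit, h2] at h1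
    have : π ^ 2 = 4 * A ^ 2 + 8 * ∫ x in Ioi A, f x := by linarith
    exact this
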